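/- Let r > 0, 0 < p < 1, and n be a non-negative integer, and let π be the truncated negative binomial probability mass function on {0,1,...,n}. Then for every integer i with 1 ≤ i ≤ n: ( ∑_{j=i+1}^{n} π_j ) / ( p(r+i) ) + ( ∑_{j=0}^{i-1} π_j ) / i ≤ (1 − π_0)/(p·r), where the first sum is interpreted as 0 when i = n. -/

import Mathlib

/-- The negative binomial pmf: `P(Z = k)` for `Z ~ NB(r,p)`. -/
noncomputable def nbPmf (r p : ℝ) (k : ℕ) : ℝ :=
  Real.Gamma (r + k) / (Real.Gamma r * k.factorial) * (1 - p) ^ r * p ^ k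

/-- The truncated negative binomial pmf on `{0,...,n}`:
`π_i = P(Z = i) / P(Z ≤ n)` for `Z ~ NB(r,p)`. -/
noncomputable def truncNbPmf (r p : ℝ) (n i : ℕ) : ℝ :=
  nbPmf r p i / ∑ j ∈ Finset.range (n + 1), nbPmf r p j

lemma nbPmf_pos {r p : ℝ} (hr : 0 < r) (hp0 : 0 < p) (hp1 : p < 1) (k : ℕ) :
    0 < nbPmf r p k := by
  unfold nbPmf
  have h1 : (0:ℝ) < r + k := by positivity
  exact mul_pos (mul_pos (div_pos (Real.Gamma_pos_of_pos h1)
    (mul_pos (Real.Gamma_pos_of_pos hr) (by exact_mod_cast Nat.factorial_pos k)))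
    (Real.rpow_pos_of_pos (by linarith) r)) (pow_pos hp0 k)

lemma nbPmf_rec {r p : ℝ} (hr : 0 < r) (k : ℕ) :
    ((k:ℝ)+1) * nbPmf r p (k+1) = p * (r + k) * nbPmf r p k := by
  unfold nbPmf
  have h1 : (0:ℝ) < r + k := by positivity
  have hg : Real.Gamma (r + ((k:ℕ)+1 : ℕ)) = (r+k) * Real.Gamma (r+(k:ℝ)) := by
    push_cast
    rw [show r + ((k:ℝ)+1) = (r + (k:ℝ)) + 1 by ring, Real.Gamma_add_one h1.ne']
  rw [hg, Nat.factorial_succ, pow_succ]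
  have hΓr : Real.Gamma r ≠ 0 := (Real.Gamma_pos_of_pos hr).ne'
  have hf : ((k.factorial : ℝ)) ≠ 0 := by exact_mod_cast (Nat.factorial_pos k).ne'
  push_cast
  field_simp

/-- The key inequality in the proof of the Stein factor bound: for `1 ≤ i ≤ n`,
`(π_{i+1} + ⋯ + π_n)/(p(r+i)) + (π_0 + ⋯ + π_{i-1})/i ≤ (1 - π₀)/(p r)`. -/
theorem truncNb_stein_factor_inequality (r p : ℝ) (hr : 0 < r) (hp0 : 0 < p) (hp1 : p < 1)
    (n : ℕ) (i : ℕ) (hi1 : 1 ≤ i) (hin : i ≤ n) :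
    (∑ j ∈ Finset.Icc (i + 1) n, truncNbPmf r p n j) / (p * (r + i))
        + (∑ j ∈ Finset.range i, truncNbPmf r p n j) / i
      ≤ (1 - truncNbPmf r p n 0) / (p * r) := by
  have hS : 0 < ∑ j ∈ Finset.range (n + 1), nbPmf r p j :=
    Finset.sum_pos (fun j _ => nbPmf_pos hr hp0 hp1 j) ⟨0, by simp⟩
  have hπpos : ∀ k, 0 < truncNbPmf r p n k := fun k =>
    div_pos (nbPmf_pos hr hp0 hp1 k) hS
  have hπrec : ∀ k : ℕ, ((k:ℝ)+1) * truncNbPmf r p n (k+1)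
      = p * (r + k) * truncNbPmf r p n k := by
    intro k
    unfold truncNbPmf
    rw [← mul_div_assoc, ← mul_div_assoc, nbPmf_rec hr]
  have hsum1 : ∑ j ∈ Finset.range (n + 1), truncNbPmf r p n j = 1 := by
    unfold truncNbPmf
    rw [← Finset.sum_div, div_self hS.ne']
  set π : ℕ → ℝ := truncNbPmf r p n with hπ
  -- sums
  set H : ℝ := ∑ j ∈ Finset.range i, π j with hH
  set T : ℝ := ∑ j ∈ Finset.Icc (i+1) n, π j with hT
  set A : ℝ := ∑ j ∈ Finset.Icc 1 i, π j with hA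
  have hTnn : 0 ≤ T := Finset.sum_nonneg fun j _ => (hπpos j).le
  have hHnn : 0 ≤ H := Finset.sum_nonneg fun j _ => (hπpos j).le
  -- split: 1 = π 0 + A + T
  have hsplit : π 0 + A + T = 1 := by
    rw [← hsum1]
    have e1 : Finset.range (n+1) = Finset.Ico 0 (n+1) := by
      rw [Finset.range_eq_Ico]
    have e2 : ∑ j ∈ Finset.Ico 0 (n+1), π j
        = π 0 + ∑ j ∈ Finset.Ico 1 (n+1), π j :=
      Finset.sum_eq_sum_Ico_succ_bot (by omega) π
    have e3 : ∑ j ∈ Finset.Ico 1 (n+1), π j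
        = ∑ j ∈ Finset.Ico 1 (i+1), π j + ∑ j ∈ Finset.Ico (i+1) (n+1), π j :=
      (Finset.sum_Ico_consecutive π (by omega) (by omega)).symm
    have e4 : Finset.Icc 1 i = Finset.Ico 1 (i+1) := by
      rw [← Finset.Ico_add_one_right_eq_Icc]
    have e5 : Finset.Icc (i+1) n = Finset.Ico (i+1) (n+1) := by
      rw [← Finset.Ico_add_one_right_eq_Icc]
    rw [e1, e2, e3, hA, hT, e4, e5]; ring
  -- key bound: p*r*H ≤ i*A
  have hkey : p * r * H ≤ (i:ℝ) * A := by
    have step1 : p * r * H ≤ ∑ j ∈ Finset.range i, ((j:ℝ)+1) * π (j+1) := by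
      rw [hH, Finset.mul_sum]
      apply Finset.sum_le_sum
      intro j _
      rw [hπrec j]
      have : p * r ≤ p * (r + j) := by
        have : (0:ℝ) ≤ j := Nat.cast_nonneg j
        nlinarith
      exact mul_le_mul_of_nonneg_right this (hπpos j).le
    have step2 : ∑ j ∈ Finset.range i, ((j:ℝ)+1) * π (j+1)
        = ∑ j ∈ Finset.Icc 1 i, (j:ℝ) * π j := by
      rw [show Finset.Icc 1 i = Finset.Ico 1 (i+1) by rw [← Finset.Ico_add_one_right_eq_Icc],
        Finset.sum_Ico_eq_sum_range]
      simp [add_comm 1]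
    have step3 : ∑ j ∈ Finset.Icc 1 i, (j:ℝ) * π j ≤ (i:ℝ) * A := by
      rw [hA, Finset.mul_sum]
      apply Finset.sum_le_sum
      intro j hj
      have hji : (j:ℝ) ≤ i := by
        exact_mod_cast (Finset.mem_Icc.mp hj).2
      exact mul_le_mul_of_nonneg_right hji (hπpos j).le
    linarith [step1, step2.le, step3]
  have hi : (0:ℝ) < i := by exact_mod_cast hi1
  have hpr : (0:ℝ) < p * r := mul_pos hp0 hr
  have hpri : (0:ℝ) < p * (r + i) := by positivity
  -- two pieces
  have piece1 : T / (p * (r + i)) ≤ T / (p * r) := by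
    have h0i : (0:ℝ) ≤ i := Nat.cast_nonneg i
    gcongr <;> linarith
  have piece2 : H / i ≤ A / (p * r) := by
    rw [div_le_div_iff₀ hi hpr]
    nlinarith [hkey]
  have hfin : (1 : ℝ) - π 0 = T + A := by linarith [hsplit]
  calc T / (p * (r + i)) + H / i ≤ T / (p * r) + A / (p * r) := by
        exact add_le_add piece1 piece2
    _ = (T + A) / (p * r) := by rw [← add_div]
    _ = (1 - π 0) / (p * r) := by rw [hfin]
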